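/- Let K be a commutative ring and let d be a unit of K. The K-linear map K[x,y,z] × K[x,y,z] → K[x,y,z] sending a pair (f, g) to f(x²-1, y²-1, z²-1) + g(x²-1, y²-1, z²-1)·(x·y·z - d⁻¹·x² - d⁻¹·y² + d⁻¹) is injective; that is, if f(x²-1, y²-1, z²-1) + g(x²-1, y²-1, z²-1)·(xyz - d⁻¹x² - d⁻¹y² + d⁻¹) = 0 in K[x,y,z], then f = 0 and g = 0. -/

import Mathlib

open MvPolynomial

section Aux

variable {K : Type*} [CommRing K]

/-- evenness at variable 0 -/
def Even0 (p : MvPolynomial (Fin 3) K) : Prop :=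
  ∀ n : Fin 3 →₀ ℕ, coeff n p ≠ 0 → Even (n 0)

lemma even0_add {p q : MvPolynomial (Fin 3) K} (hp : Even0 p) (hq : Even0 q) :
    Even0 (p + q) := by
  intro n hn
  rw [coeff_add] at hn
  by_cases h1 : coeff n p = 0
  · exact hq n (by simpa [h1] using hn)
  · exact hp n h1

lemma even0_mul {p q : MvPolynomial (Fin 3) K} (hp : Even0 p) (hq : Even0 q) :
    Even0 (p * q) := by
  intro n hn
  rw [coeff_mul] at hn
  obtain ⟨x, hmem, hx⟩ := Finset.exists_ne_zero_of_sum_ne_zero hn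
  have h1 : coeff x.1 p ≠ 0 := left_ne_zero_of_mul hx
  have h2 : coeff x.2 q ≠ 0 := right_ne_zero_of_mul hx
  have hsum : x.1 + x.2 = n := Finset.HasAntidiagonal.mem_antidiagonal.mp hmem
  have : n 0 = x.1 0 + x.2 0 := by rw [← hsum]; simp
  rw [this]
  exact (hp _ h1).add (hq _ h2)

lemma even0_C (a : K) : Even0 (C a : MvPolynomial (Fin 3) K) := by
  intro n hn
  rw [coeff_C] at hn
  split_ifs at hn with h
  · subst h; simp
  · exact absurd rfl hn

lemma even0_neg {p : MvPolynomial (Fin 3) K} (hp : Even0 p) : Even0 (-p) := by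
  intro n hn
  rw [coeff_neg, neg_ne_zero] at hn
  exact hp n hn

lemma even0_sub {p q : MvPolynomial (Fin 3) K} (hp : Even0 p) (hq : Even0 q) :
    Even0 (p - q) := by
  rw [sub_eq_add_neg]; exact even0_add hp (even0_neg hq)

lemma even0_Xsq (i : Fin 3) : Even0 ((X i : MvPolynomial (Fin 3) K) ^ 2) := by
  intro n hn
  rw [X_pow_eq_monomial, coeff_monomial] at hn
  split_ifs at hn with h
  · subst h
    simp only [Finsupp.single_apply]
    split_ifs <;> decide
  · exact absurd rfl hn

/-- the distinguished substitution vector -/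
noncomputable def vsub : Fin 3 → MvPolynomial (Fin 3) K :=
  ![(X 0 : MvPolynomial (Fin 3) K) ^ 2 - 1, (X 1) ^ 2 - 1, (X 2) ^ 2 - 1]

lemma even0_vsub (i : Fin 3) : Even0 (vsub (K := K) i) := by
  fin_cases i <;>
    exact even0_sub (even0_Xsq _) (by simpa using even0_C (1 : K))

lemma even0_aeval (f : MvPolynomial (Fin 3) K) : Even0 (aeval (vsub (K := K)) f) := by
  induction f using MvPolynomial.induction_on with
  | C a => simpa using even0_C a
  | add p q hp hq => simpa [map_add] using even0_add hp hq
  | mul_X p i hp =>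
      rw [map_mul, aeval_X]
      exact even0_mul hp (even0_vsub i)

lemma expand_monomial_smul (m : Fin 3 →₀ ℕ) (r : K) :
    expand 2 (monomial m r : MvPolynomial (Fin 3) K) = monomial (2 • m) r := by
  rw [monomial_eq, monomial_eq, map_mul, expand_C]
  congr 1
  rw [Finsupp.prod, map_prod]
  rw [Finsupp.prod_of_support_subset (2 • m) (Finsupp.support_smul) (fun i k => X i ^ k)
    (by intro i _; exact pow_zero _)]
  refine Finset.prod_congr rfl fun i _ => ?_
  rw [map_pow, expand_X, ← pow_mul, Finsupp.smul_apply]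
  rw [smul_eq_mul, mul_comm]

lemma coeff_expand_two (q : MvPolynomial (Fin 3) K) (m : Fin 3 →₀ ℕ) :
    coeff (2 • m) (expand 2 q) = coeff m q := by
  conv_lhs => rw [q.as_sum]
  rw [map_sum]
  simp only [expand_monomial_smul]
  rw [MvPolynomial.coeff_sum]
  simp only [coeff_monomial]
  have hinj : ∀ v : Fin 3 →₀ ℕ, 2 • v = 2 • m → v = m := by
    intro v hv
    ext i
    have := DFunLike.congr_fun hv i
    simp only [Finsupp.smul_apply, smul_eq_mul] at this
    omega
  by_cases hm : m ∈ q.support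
  · rw [Finset.sum_eq_single m]
    · simp
    · intro b _ hb
      rw [if_neg (fun hc => hb (hinj b hc))]
    · intro h; exact absurd hm h
  · rw [Finset.sum_eq_zero]
    · exact (MvPolynomial.notMem_support_iff.mp hm).symm
    · intro b hb
      rw [if_neg (fun hc => (hinj b hc ▸ hb : m ∈ q.support) |> hm)]

lemma expand_two_injective :
    Function.Injective (expand 2 : MvPolynomial (Fin 3) K →ₐ[K] MvPolynomial (Fin 3) K) := by
  intro p q hpq
  ext m
  rw [← coeff_expand_two p m, ← coeff_expand_two q m, hpq]

lemma aeval_vsub_eq (f : MvPolynomial (Fin 3) K) :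
    aeval (vsub (K := K)) f
      = expand 2 (aeval ![(X 0 : MvPolynomial (Fin 3) K) - 1, X 1 - 1, X 2 - 1] f) := by
  have hfun : (fun i => expand 2 (![(X 0 : MvPolynomial (Fin 3) K) - 1, X 1 - 1, X 2 - 1] i))
      = vsub (K := K) := by
    funext i
    fin_cases i <;> simp [vsub, expand_X]
  rw [← AlgHom.comp_apply, comp_aeval, hfun]

lemma aeval_vsub_injective :
    Function.Injective (aeval (vsub (K := K)) : MvPolynomial (Fin 3) K →ₐ[K] _) := by
  intro p q hpq
  rw [aeval_vsub_eq, aeval_vsub_eq] at hpq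
  have h2 := expand_two_injective hpq
  have hret : ∀ r : MvPolynomial (Fin 3) K,
      aeval ![(X 0 : MvPolynomial (Fin 3) K) + 1, X 1 + 1, X 2 + 1]
        (aeval ![(X 0 : MvPolynomial (Fin 3) K) - 1, X 1 - 1, X 2 - 1] r) = r := by
    intro r
    rw [← AlgHom.comp_apply, comp_aeval]
    have : (fun i => aeval ![(X 0 : MvPolynomial (Fin 3) K) + 1, X 1 + 1, X 2 + 1]
        (![(X 0 : MvPolynomial (Fin 3) K) - 1, X 1 - 1, X 2 - 1] i)) = X := by
      funext i
      fin_cases i <;> simp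
    rw [this, aeval_X_left]
    rfl
  rw [← hret p, ← hret q, h2]

end Aux

/-- Injectivity of `Φ` on normal forms `f + g·t`: if
`f(x²-1, y²-1, z²-1) + g(x²-1, y²-1, z²-1)·(xyz - d⁻¹x² - d⁻¹y² + d⁻¹) = 0` in `K[x,y,z]`,
then `f = 0` and `g = 0`. -/
theorem stmt4 (K : Type*) [CommRing K] (d : Kˣ)
    (f g : MvPolynomial (Fin 3) K)
    (h : aeval
        ![(MvPolynomial.X 0 : MvPolynomial (Fin 3) K) ^ 2 - 1,
          (MvPolynomial.X 1) ^ 2 - 1,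
          (MvPolynomial.X 2) ^ 2 - 1] f
      + aeval
        ![(MvPolynomial.X 0 : MvPolynomial (Fin 3) K) ^ 2 - 1,
          (MvPolynomial.X 1) ^ 2 - 1,
          (MvPolynomial.X 2) ^ 2 - 1] g
        * ((MvPolynomial.X 0) * (MvPolynomial.X 1) * (MvPolynomial.X 2)
            - C ((d⁻¹ : Kˣ) : K) * (MvPolynomial.X 0) ^ 2
            - C ((d⁻¹ : Kˣ) : K) * (MvPolynomial.X 1) ^ 2
            + C ((d⁻¹ : Kˣ) : K)) = 0) :
    f = 0 ∧ g = 0 := by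
  set c : K := ((d⁻¹ : Kˣ) : K) with hc
  set F := aeval (vsub (K := K)) f with hF
  set G := aeval (vsub (K := K)) g with hG
  have hveq : ![(MvPolynomial.X 0 : MvPolynomial (Fin 3) K) ^ 2 - 1,
          (MvPolynomial.X 1) ^ 2 - 1, (MvPolynomial.X 2) ^ 2 - 1] = vsub (K := K) := rfl
  rw [hveq] at h
  -- split into even and odd parts
  set P : MvPolynomial (Fin 3) K :=
    F - C c * X 0 ^ 2 * G - C c * X 1 ^ 2 * G + C c * G with hP
  set Q : MvPolynomial (Fin 3) K := G * (X 0 * X 1 * X 2) with hQ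
  have hPQ : P + Q = 0 := by
    rw [hP, hQ, ← h, hF, hG]; ring
  have hPeven : Even0 P := by
    refine even0_add (even0_sub (even0_sub (even0_aeval f) ?_) ?_) ?_
    · exact even0_mul (even0_mul (even0_C c) (even0_Xsq 0)) (even0_aeval g)
    · exact even0_mul (even0_mul (even0_C c) (even0_Xsq 1)) (even0_aeval g)
    · exact even0_mul (even0_C c) (even0_aeval g)
  have hQodd : ∀ n : Fin 3 →₀ ℕ, coeff n Q ≠ 0 → ¬ Even (n 0) := by
    intro n hn
    rw [hQ, coeff_mul] at hn
    obtain ⟨x, hmem, hx⟩ := Finset.exists_ne_zero_of_sum_ne_zero hn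
    have h1 : coeff x.1 G ≠ 0 := left_ne_zero_of_mul hx
    have h2 : coeff x.2 (X 0 * X 1 * X 2 : MvPolynomial (Fin 3) K) ≠ 0 :=
      right_ne_zero_of_mul hx
    have he : Even (x.1 0) := even0_aeval g x.1 h1
    have hx2 : x.2 = Finsupp.single 0 1 + Finsupp.single 1 1 + Finsupp.single 2 1 := by
      have : (X 0 * X 1 * X 2 : MvPolynomial (Fin 3) K)
          = monomial (Finsupp.single 0 1 + Finsupp.single 1 1 + Finsupp.single 2 1) 1 := by
        rw [X, X, X, monomial_mul, monomial_mul, one_mul, one_mul]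
      rw [this, coeff_monomial] at h2
      split_ifs at h2 with hh
      · exact hh.symm
      · exact absurd rfl h2
    have hsum : x.1 + x.2 = n := Finset.HasAntidiagonal.mem_antidiagonal.mp hmem
    have hn0 : n 0 = x.1 0 + 1 := by
      rw [← hsum]
      simp [hx2, Finsupp.single_apply]
    rw [hn0]
    rcases he with ⟨k, hk⟩
    intro ⟨j, hj⟩
    omega
  have hQzero : Q = 0 := by
    ext n
    have hsum : coeff n P + coeff n Q = 0 := by rw [← coeff_add, hPQ, coeff_zero]
    by_cases he : Even (n 0)
    · have : coeff n Q = 0 := by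
        by_contra hq; exact hQodd n hq he
      simpa using this
    · have hp : coeff n P = 0 := by
        by_contra hp; exact he (hPeven n hp)
      rw [hp, zero_add] at hsum
      simpa using hsum
  have hGzero : G = 0 := by
    ext m
    have : coeff (m + Finsupp.single 0 1 + Finsupp.single 1 1 + Finsupp.single 2 1) Q
        = coeff m G := by
      rw [hQ, ← mul_assoc, ← mul_assoc]
      rw [coeff_mul_X, coeff_mul_X, coeff_mul_X]
    rw [hQzero, coeff_zero] at this
    simpa using this.symm
  have hg : g = 0 := by
    apply aeval_vsub_injective
    rw [← hG, hGzero, map_zero]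
  have hFzero : F = 0 := by
    have := hPQ
    rw [hP, hQ, hGzero] at this
    simpa using this
  have hf : f = 0 := by
    apply aeval_vsub_injective
    rw [← hF, hFzero, map_zero]
  exact ⟨hf, hg⟩
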